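/- arXiv:1704.01223 — 5 statements merged into one kernel-verified Lean document; each statement's English description precedes it below -/
import Mathlib

section
/- For the optimal interpolator L* = H Σ C^T (C(Σ + Λ_w)C^T)^{-1}, the error covariance admits the closed form K(L*) = H V_K (Λ^{-1} + Σ_{i∈S} λ_{w,i}^{-1} v_i v_i^H)^{-1} V_K^H H^H. -/
open Matrix Finset ComplexOrder

noncomputable section

/-- For the optimal interpolator `L* = H Σ Cᵀ (C (Σ + Λ_w) Cᵀ)⁻¹`, the
error covariance admits the closed form
`K(L*) = H V_K (Λ⁻¹ + ∑_{i∈S} λ_{w,i}⁻¹ v_i v_iᴴ)⁻¹ V_Kᴴ Hᴴ`. -/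
theorem optimal_error_covariance_closed_form
    (n k m p : ℕ)
    (v : Fin n → Fin k → ℂ)
    (H : Matrix (Fin m) (Fin n) ℂ)
    (lam : Fin k → ℝ) (hlam : ∀ j, 0 < lam j)
    (lw : Fin n → ℝ) (hlw : ∀ i, 0 < lw i)
    (VKmat : Matrix (Fin n) (Fin k) ℂ)
    (hVK : VKmat = Matrix.of fun i j => star (v i j))
    (Sig : Matrix (Fin n) (Fin n) ℂ)
    (hSig : Sig = VKmat * Matrix.diagonal (fun j => (lam j : ℂ)) * VKmatᴴ)
    (Lw : Matrix (Fin n) (Fin n) ℂ)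
    (hLw : Lw = Matrix.diagonal (fun i => (lw i : ℂ)))
    (S : Finset (Fin n)) (hS : S.card = p)
    (C : Matrix (Fin p) (Fin n) ℂ)
    (hC : C = (1 : Matrix (Fin n) (Fin n) ℂ).submatrix
      (fun i => ((S.orderIsoOfFin hS i : Fin n))) id)
    (K : Matrix (Fin m) (Fin p) ℂ → Matrix (Fin m) (Fin m) ℂ)
    (hK : ∀ L, K L = H * Sig * Hᴴ - L * C * Sig * Hᴴ - H * Sig * Cᵀ * Lᴴ
        + L * C * (Sig + Lw) * Cᵀ * Lᴴ) :
    K (H * Sig * Cᵀ * (C * (Sig + Lw) * Cᵀ)⁻¹) =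
      H * VKmat *
        ((Matrix.diagonal fun j => (lam j : ℂ))⁻¹ +
          ∑ i ∈ S, ((lw i : ℂ))⁻¹ • Matrix.vecMulVec (v i) (star (v i)))⁻¹ *
        VKmatᴴ * Hᴴ := by
  set σ : Fin p → Fin n := fun a => ((S.orderIsoOfFin hS a : Fin n)) with hσdef
  have hσinj : Function.Injective σ := fun a b hab =>
    (S.orderIsoOfFin hS).injective (Subtype.ext hab)
  set Λc : Matrix (Fin k) (Fin k) ℂ := Matrix.diagonal (fun j => (lam j : ℂ)) with hΛc
  set W : Matrix (Fin p) (Fin k) ℂ := VKmat.submatrix σ id with hWdef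
  set D : Matrix (Fin p) (Fin p) ℂ := Matrix.diagonal (fun a => (lw (σ a) : ℂ)) with hDdef
  set M : Matrix (Fin p) (Fin p) ℂ := W * Λc * Wᴴ + D with hMdef
  -- multiplication by the selection matrix
  have hCmul : ∀ (q : Type) (_ : Fintype q) (A : Matrix (Fin n) q ℂ),
      C * A = A.submatrix σ id := by
    intro q _ A
    rw [hC]
    simpa using Matrix.one_submatrix_mul σ (Equiv.refl (Fin n)) A
  have hmulC : ∀ (q : Type) (_ : Fintype q) (A : Matrix q (Fin n) ℂ),
      A * Cᵀ = A.submatrix id σ := by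
    intro q _ A
    rw [hC, Matrix.transpose_submatrix, Matrix.transpose_one]
    simpa using Matrix.mul_submatrix_one (Equiv.refl (Fin n)) σ A
  -- Hermitian facts
  have hΛH : Λcᴴ = Λc := by
    rw [hΛc, Matrix.diagonal_conjTranspose]
    ext i j
    simp only [Matrix.diagonal_apply, Pi.star_apply]
    split <;> simp [Complex.conj_ofReal]
  have hSigH : Sigᴴ = Sig := by
    rw [hSig]
    simp only [Matrix.conjTranspose_mul, Matrix.conjTranspose_conjTranspose, hΛH,
      Matrix.mul_assoc]
  have hCHT : Cᵀᴴ = C := by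
    rw [hC]
    ext a b
    simp [Matrix.conjTranspose_apply, Matrix.one_apply, apply_ite (star : ℂ → ℂ), eq_comm]
  -- fused products
  have hCV : C * VKmat = W := hCmul _ inferInstance VKmat
  have hVC : VKmatᴴ * Cᵀ = Wᴴ := by
    rw [hmulC _ inferInstance (VKmatᴴ), hWdef, Matrix.conjTranspose_submatrix]
  have hD' : C * Lw * Cᵀ = D := by
    rw [hCmul _ inferInstance Lw, hmulC _ inferInstance (Lw.submatrix σ id), Matrix.submatrix_submatrix, hLw, hDdef]
    ext a b
    simp [Matrix.diagonal_apply, hσinj.eq_iff]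
  have hMeq : C * (Sig + Lw) * Cᵀ = M := by
    rw [Matrix.mul_add, Matrix.add_mul, hD', hMdef, hSig]
    congr 1
    rw [← hVC, ← hCV]
    simp only [Matrix.mul_assoc]
  -- positivity and invertibility
  have hΛpd : Λc.PosDef := Matrix.PosDef.diagonal fun j => by exact_mod_cast hlam j
  have hDpd : D.PosDef := Matrix.PosDef.diagonal fun a => by exact_mod_cast hlw (σ a)
  have hMpd : M.PosDef :=
    Matrix.PosDef.posSemidef_add (hΛpd.posSemidef.mul_mul_conjTranspose_same W) hDpd
  have hMd : IsUnit M.det := (Matrix.isUnit_iff_isUnit_det M).1 hMpd.isUnit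
  have hΛd : IsUnit Λc.det := (Matrix.isUnit_iff_isUnit_det Λc).1 hΛpd.isUnit
  have hDd : IsUnit D.det := (Matrix.isUnit_iff_isUnit_det D).1 hDpd.isUnit
  have hMH : Mᴴ = M := hMpd.isHermitian
  have hMinvH : M⁻¹ᴴ = M⁻¹ := by rw [Matrix.conjTranspose_nonsing_inv, hMH]
  have hMinvM : M⁻¹ * M = 1 := Matrix.nonsing_inv_mul M hMd
  -- the inverse of D
  have hDinv : D⁻¹ = Matrix.diagonal (fun a => ((lw (σ a) : ℂ))⁻¹) := by
    apply Matrix.inv_eq_right_inv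
    rw [hDdef, Matrix.diagonal_mul_diagonal]
    have h1 : (fun i => (lw (σ i) : ℂ) * ((lw (σ i) : ℂ))⁻¹) = fun _ => (1 : ℂ) :=
      funext fun a => mul_inv_cancel₀ (by exact_mod_cast (hlw (σ a)).ne')
    rw [h1, Matrix.diagonal_one]
  -- the sum identity
  have hT : (∑ i ∈ S, ((lw i : ℂ))⁻¹ • Matrix.vecMulVec (v i) (star (v i)))
      = Wᴴ * D⁻¹ * W := by
    rw [hDinv]
    ext x y
    rw [Matrix.sum_apply, ← Finset.sum_coe_sort S,
      ← Equiv.sum_comp (S.orderIsoOfFin hS).toEquiv, Matrix.mul_apply]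
    apply Finset.sum_congr rfl
    intro a _
    rw [Matrix.mul_diagonal]
    simp only [Matrix.smul_apply, Matrix.vecMulVec_apply, Matrix.conjTranspose_apply,
      hWdef, Matrix.submatrix_apply, id_eq, hVK, Matrix.of_apply, star_star,
      Pi.star_apply, smul_eq_mul]
    simp only [hσdef, RelIso.coe_fn_toEquiv]
    ring
  -- Woodbury
  have hWood : (Λc⁻¹ + Wᴴ * D⁻¹ * W)⁻¹ = Λc - Λc * Wᴴ * M⁻¹ * W * Λc := by
    have hΛi : Λc⁻¹⁻¹ = Λc := Matrix.nonsing_inv_nonsing_inv Λc hΛd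
    have hDi : D⁻¹⁻¹ = D := Matrix.nonsing_inv_nonsing_inv D hDd
    have h := Matrix.add_mul_mul_inv_eq_sub Λc⁻¹ Wᴴ D⁻¹ W
      (IsUnit.of_mul_eq_one _ (Matrix.nonsing_inv_mul Λc hΛd))
      (IsUnit.of_mul_eq_one _ (Matrix.nonsing_inv_mul D hDd)) ?_
    · rw [h, hΛi, hDi, hMdef, add_comm D (W * Λc * Wᴴ)]
    · rw [hDi, hΛi, add_comm]
      exact hMpd.isUnit
  -- cancellation of the quadratic term
  rw [hK, hMeq]
  have hLH : (H * Sig * Cᵀ * M⁻¹)ᴴ = M⁻¹ * (C * (Sig * Hᴴ)) := by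
    simp only [Matrix.conjTranspose_mul, hMinvH, hCHT, hSigH, Matrix.mul_assoc]
  have hLM : H * Sig * Cᵀ * M⁻¹ * C * (Sig + Lw) * Cᵀ = H * Sig * Cᵀ := by
    calc H * Sig * Cᵀ * M⁻¹ * C * (Sig + Lw) * Cᵀ
        = H * Sig * Cᵀ * M⁻¹ * (C * (Sig + Lw) * Cᵀ) := by
          simp only [Matrix.mul_assoc]
      _ = H * Sig * Cᵀ * (M⁻¹ * M) := by rw [hMeq, Matrix.mul_assoc]
      _ = H * Sig * Cᵀ := by rw [hMinvM, Matrix.mul_one]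
  rw [hLH, hLM]
  rw [sub_add_cancel]
  rw [hT, hWood, hSig]
  simp only [Matrix.mul_sub, Matrix.sub_mul]
  congr 1
  · simp only [Matrix.mul_assoc]
  · rw [← hVC, ← hCV]
    simp only [Matrix.mul_assoc]
end
end

section
/- The scalar set function MSE(S) = trace(K*(S)) is monotone decreasing: for all subsets A ⊆ B ⊆ {1,…,n}, MSE(A) ≥ MSE(B). -/
open Matrix Finset ComplexOrder

/-- The matrix `M(S) = Λ⁻¹ + ∑_{i ∈ S} λ_{w,i}⁻¹ v_i v_iᴴ`. -/
noncomputable def Mmat {n k : ℕ} (lam : Fin k → ℝ) (lw : Fin n → ℝ)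
    (v : Fin n → Fin k → ℂ) (S : Finset (Fin n)) : Matrix (Fin k) (Fin k) ℂ :=
  (Matrix.diagonal fun j => (lam j : ℂ))⁻¹ +
    ∑ i ∈ S, ((lw i : ℂ))⁻¹ • Matrix.vecMulVec (v i) (star (v i))

/-- The matrix `V_K` whose `i`-th row is `v_iᴴ`. -/
noncomputable def VKmat {n k : ℕ} (v : Fin n → Fin k → ℂ) : Matrix (Fin n) (Fin k) ℂ :=
  Matrix.of fun i j => star (v i j)

/-- The optimal interpolation error covariance `K*(S) = H V_K M(S)⁻¹ V_Kᴴ Hᴴ`. -/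
noncomputable def Kstar {n k m : ℕ} (lam : Fin k → ℝ) (lw : Fin n → ℝ)
    (v : Fin n → Fin k → ℂ) (H : Matrix (Fin m) (Fin n) ℂ) (S : Finset (Fin n)) :
    Matrix (Fin m) (Fin m) ℂ :=
  H * VKmat v * (Mmat lam lw v S)⁻¹ * (VKmat v)ᴴ * Hᴴ

/-- The interpolation mean-square error `MSE(S) = trace K*(S)`, a (nonnegative) real. -/
noncomputable def MSE {n k m : ℕ} (lam : Fin k → ℝ) (lw : Fin n → ℝ)
    (v : Fin n → Fin k → ℂ) (H : Matrix (Fin m) (Fin n) ℂ) (S : Finset (Fin n)) : ℝ :=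
  ((Kstar lam lw v H S).trace).re

lemma outer_posSemidef {k : ℕ} (x : Fin k → ℂ) :
    (Matrix.vecMulVec x (star x)).PosSemidef := by
  rw [Matrix.posSemidef_iff_dotProduct_mulVec]
  constructor
  · ext i j
    simp [Matrix.vecMulVec_apply, Matrix.conjTranspose_apply, mul_comm]
  · intro y
    have h : Matrix.vecMulVec x (star x) *ᵥ y = (star x ⬝ᵥ y) • x := by
      ext i
      simp only [Matrix.mulVec, Matrix.vecMulVec_apply, dotProduct, Pi.smul_apply,
        smul_eq_mul, Finset.sum_mul, Finset.mul_sum]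
      exact Finset.sum_congr rfl fun j _ => by ring
    rw [h, dotProduct_smul]
    have : star y ⬝ᵥ x = star (star x ⬝ᵥ y) := by
      simp only [dotProduct, star_sum, star_mul', star_star, Pi.star_apply]
      exact Finset.sum_congr rfl fun j _ => by ring
    rw [smul_eq_mul, this]
    exact mul_star_self_nonneg _

lemma smul_posSemidef {k : ℕ} {M : Matrix (Fin k) (Fin k) ℂ} (hM : M.PosSemidef)
    {c : ℝ} (hc : 0 ≤ c) : ((c : ℂ) • M).PosSemidef := by
  rw [Matrix.posSemidef_iff_dotProduct_mulVec]
  constructor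
  · ext i j
    simp [Matrix.conjTranspose_apply, hM.1.apply]
  · intro y
    rw [smul_mulVec, dotProduct_smul, smul_eq_mul]
    exact mul_nonneg (by exact_mod_cast Complex.zero_le_real.mpr hc) (hM.dotProduct_mulVec_nonneg y)

lemma psd_trace_re_nonneg {m : ℕ} {M : Matrix (Fin m) (Fin m) ℂ} (hM : M.PosSemidef) :
    0 ≤ M.trace.re := by
  have h : ∀ i, 0 ≤ M i i := fun i => by
    have := hM.dotProduct_mulVec_nonneg (Pi.single i 1)
    simpa [Matrix.mulVec_single, dotProduct, Pi.single_apply] using this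
  have htr : 0 ≤ M.trace := Finset.sum_nonneg fun i _ => h i
  exact (Complex.le_def.mp htr).1

lemma posDef_add_posSemidef {k : ℕ} {A B : Matrix (Fin k) (Fin k) ℂ}
    (hA : A.PosDef) (hB : B.PosSemidef) : (A + B).PosDef := by
  refine Matrix.PosDef.of_dotProduct_mulVec_pos (hA.1.add hB.1) fun x hx => ?_
  rw [add_mulVec, dotProduct_add]
  exact add_pos_of_pos_of_nonneg (hA.dotProduct_mulVec_pos hx) (hB.dotProduct_mulVec_nonneg x)

lemma sum_outer_posSemidef {n k : ℕ} (lw : Fin n → ℝ) (hlw : ∀ i, 0 < lw i)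
    (v : Fin n → Fin k → ℂ) (S : Finset (Fin n)) :
    (∑ i ∈ S, ((lw i : ℂ))⁻¹ • Matrix.vecMulVec (v i) (star (v i))).PosSemidef := by
  refine Finset.sum_induction _ _ (fun a b ha hb => ha.add hb) .zero fun i _ => ?_
  have : ((lw i : ℂ))⁻¹ = (((lw i)⁻¹ : ℝ) : ℂ) := by push_cast; ring
  rw [this]
  exact smul_posSemidef (outer_posSemidef (v i)) (inv_nonneg.mpr (hlw i).le)

lemma Mmat_posDef {n k : ℕ} (lam : Fin k → ℝ) (hlam : ∀ j, 0 < lam j)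
    (lw : Fin n → ℝ) (hlw : ∀ i, 0 < lw i)
    (v : Fin n → Fin k → ℂ) (S : Finset (Fin n)) : (Mmat lam lw v S).PosDef := by
  refine posDef_add_posSemidef ?_ (sum_outer_posSemidef lw hlw v S)
  exact (Matrix.posDef_diagonal_iff.mpr fun j => by
    exact_mod_cast Complex.zero_lt_real.mpr (hlam j)).inv

lemma Mmat_inv_sub_posSemidef {n k : ℕ} (lam : Fin k → ℝ) (hlam : ∀ j, 0 < lam j)
    (lw : Fin n → ℝ) (hlw : ∀ i, 0 < lw i)
    (v : Fin n → Fin k → ℂ) (A B : Finset (Fin n)) (hAB : A ⊆ B) :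
    ((Mmat lam lw v A)⁻¹ - (Mmat lam lw v B)⁻¹).PosSemidef := by
  set MA := Mmat lam lw v A with hMAdef
  set MB := Mmat lam lw v B with hMBdef
  have hMA := Mmat_posDef lam hlam lw hlw v A
  have hMB := Mmat_posDef lam hlam lw hlw v B
  letI := hMA.isUnit.invertible
  letI := hMB.isUnit.invertible
  have hD : (MB - MA).PosSemidef := by
    have hsum : MB = MA + ∑ i ∈ B \ A, ((lw i : ℂ))⁻¹ • Matrix.vecMulVec (v i) (star (v i)) := by
      rw [hMAdef, hMBdef]
      unfold Mmat
      rw [← Finset.sum_sdiff hAB]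
      abel
    rw [hsum, add_sub_cancel_left]
    exact sum_outer_posSemidef lw hlw v _
  have key : MA⁻¹ - MB⁻¹ =
      MB⁻¹ * ((MB - MA) + (MB - MA) * MA⁻¹ * (MB - MA)) * MB⁻¹ := by
    simp only [Matrix.mul_sub, Matrix.sub_mul, Matrix.mul_add, Matrix.add_mul,
      Matrix.mul_assoc, Matrix.mul_inv_cancel_left_of_invertible,
      Matrix.inv_mul_cancel_left_of_invertible, Matrix.mul_inv_of_invertible,
      Matrix.inv_mul_of_invertible, Matrix.mul_one, Matrix.one_mul]
    abel
  rw [key]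
  have h1 : ((MB - MA) * MA⁻¹ * (MB - MA)).PosSemidef := by
    have := (hMA.inv.posSemidef).conjTranspose_mul_mul_same (MB - MA)
    rwa [hD.isHermitian.eq] at this
  have h2 := (hD.add h1).mul_mul_conjTranspose_same MB⁻¹
  rwa [hMB.isHermitian.inv.eq] at h2


/-- The scalar set function `MSE(S) = trace K*(S)` is monotone
decreasing: for all `A ⊆ B`, `MSE(A) ≥ MSE(B)`. -/
theorem MSE_monotone_decreasing
    (n k m : ℕ)
    (v : Fin n → Fin k → ℂ)
    (H : Matrix (Fin m) (Fin n) ℂ)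
    (lam : Fin k → ℝ) (hlam : ∀ j, 0 < lam j)
    (lw : Fin n → ℝ) (hlw : ∀ i, 0 < lw i)
    (A B : Finset (Fin n)) (hAB : A ⊆ B) :
    MSE lam lw v H B ≤ MSE lam lw v H A := by
  have hMA := Mmat_posDef lam hlam lw hlw v A
  have hMB := Mmat_posDef lam hlam lw hlw v B
  have hmono := Mmat_inv_sub_posSemidef lam hlam lw hlw v A B hAB
  have hdiff : Kstar lam lw v H A - Kstar lam lw v H B =
      (H * VKmat v) * ((Mmat lam lw v A)⁻¹ - (Mmat lam lw v B)⁻¹) * (H * VKmat v)ᴴ := by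
    unfold Kstar
    simp only [Matrix.mul_sub, Matrix.sub_mul, Matrix.conjTranspose_mul, Matrix.mul_assoc]
  have hpsd := hmono.mul_mul_conjTranspose_same (H * VKmat v)
  rw [← hdiff] at hpsd
  have h := psd_trace_re_nonneg hpsd
  rw [Matrix.trace_sub, Complex.sub_re] at h
  unfold MSE
  linarith
end

section
/- Decay-rate bound on the MSE: assume W = V_K^H H^H H V_K is positive definite and let ℓ_max = max_{1≤i≤n} ℓ_i with ℓ_i = λ_{w,i}^{-1} v_i^H W^{-1} v_i. Then for every subset S ⊆ {1,…,n}, MSE(S) ≥ k² / ( trace(Λ^{-1} W^{-1}) + |S|·ℓ_max ). -/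
open Matrix Finset ComplexOrder

lemma trace_conjTranspose_mul {k : ℕ} (X Y : Matrix (Fin k) (Fin k) ℂ) :
    (Xᴴ * Y).trace = ∑ p : Fin k × Fin k, (starRingEnd ℂ) (X p.1 p.2) * Y p.1 p.2 := by
  simp only [Matrix.trace, Matrix.diag, Matrix.mul_apply, Matrix.conjTranspose_apply,
    Fintype.sum_prod_type]
  exact Finset.sum_comm

lemma trace_conjTranspose_mul_self_re {k : ℕ} (X : Matrix (Fin k) (Fin k) ℂ) :
    ((Xᴴ * X).trace).re = ∑ p : Fin k × Fin k, ‖X p.1 p.2‖ ^ 2 := by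
  rw [trace_conjTranspose_mul, Complex.re_sum]
  refine Finset.sum_congr rfl fun p _ => ?_
  rw [← Complex.normSq_eq_conj_mul_self, ← Complex.sq_norm]
  rw [Complex.ofReal_re]

lemma trace_conjTranspose_mul_self_re_nonneg {k : ℕ} (X : Matrix (Fin k) (Fin k) ℂ) :
    0 ≤ ((Xᴴ * X).trace).re := by
  rw [trace_conjTranspose_mul_self_re]
  exact Finset.sum_nonneg fun p _ => sq_nonneg _

lemma cs_trace {k : ℕ} (X Y : Matrix (Fin k) (Fin k) ℂ) :
    (((Xᴴ * Y).trace).re) ^ 2 ≤ ((Xᴴ * X).trace).re * ((Yᴴ * Y).trace).re := by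
  have hb : |((Xᴴ * Y).trace).re|
      ≤ ∑ p : Fin k × Fin k, ‖X p.1 p.2‖ * ‖Y p.1 p.2‖ := by
    calc |((Xᴴ * Y).trace).re| ≤ ‖(Xᴴ * Y).trace‖ := Complex.abs_re_le_norm _
    _ ≤ ∑ p : Fin k × Fin k, ‖(starRingEnd ℂ) (X p.1 p.2) * Y p.1 p.2‖ := by
        rw [trace_conjTranspose_mul]; exact norm_sum_le _ _
    _ = _ := by simp [_root_.map_mul]
  calc (((Xᴴ * Y).trace).re) ^ 2 = |((Xᴴ * Y).trace).re| ^ 2 := (sq_abs _).symm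
  _ ≤ (∑ p : Fin k × Fin k, ‖X p.1 p.2‖ * ‖Y p.1 p.2‖) ^ 2 := by
      exact pow_le_pow_left₀ (abs_nonneg _) hb 2
  _ ≤ (∑ p : Fin k × Fin k, ‖X p.1 p.2‖ ^ 2) *
        ∑ p : Fin k × Fin k, ‖Y p.1 p.2‖ ^ 2 :=
      Finset.sum_mul_sq_le_sq_mul_sq _ _ _
  _ = _ := by rw [trace_conjTranspose_mul_self_re, trace_conjTranspose_mul_self_re]

open scoped MatrixOrder in
lemma key_cs {k : ℕ} {A B : Matrix (Fin k) (Fin k) ℂ} (hA : A.PosDef) (hB : B.PosDef) :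
    (k : ℝ) ^ 2 ≤ ((A⁻¹ * B).trace).re * ((A * B⁻¹).trace).re ∧
      0 ≤ ((A⁻¹ * B).trace).re ∧ 0 ≤ ((A * B⁻¹).trace).re := by
  set P := CFC.sqrt A with hPdef
  set Q := CFC.sqrt B with hQdef
  have hPH : Pᴴ = P := (Matrix.nonneg_iff_posSemidef.mp (CFC.sqrt_nonneg A)).1
  have hQH : Qᴴ = Q := (Matrix.nonneg_iff_posSemidef.mp (CFC.sqrt_nonneg B)).1
  have hPP : P * P = A := CFC.sqrt_mul_sqrt_self A hA.posSemidef.nonneg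
  have hQQ : Q * Q = B := CFC.sqrt_mul_sqrt_self B hB.posSemidef.nonneg
  have hdetP : IsUnit P.det := by
    rw [isUnit_iff_ne_zero]
    intro h
    exact hA.det_pos.ne' (by rw [← hPP, det_mul, h, mul_zero])
  have hdetQ : IsUnit Q.det := by
    rw [isUnit_iff_ne_zero]
    intro h
    exact hB.det_pos.ne' (by rw [← hQQ, det_mul, h, mul_zero])
  have hPinv : P * P⁻¹ = 1 := mul_nonsing_inv _ hdetP
  have hPinv' : P⁻¹ * P = 1 := nonsing_inv_mul _ hdetP
  have hQinv : Q * Q⁻¹ = 1 := mul_nonsing_inv _ hdetQ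
  have hQinv' : Q⁻¹ * Q = 1 := nonsing_inv_mul _ hdetQ
  have hPinvH : (P⁻¹)ᴴ = P⁻¹ := by rw [conjTranspose_nonsing_inv, hPH]
  have hQinvH : (Q⁻¹)ᴴ = Q⁻¹ := by rw [conjTranspose_nonsing_inv, hQH]
  set X := Q * P⁻¹ with hXdef
  set Y := Q⁻¹ * P with hYdef
  have hXH : Xᴴ = P⁻¹ * Q := by rw [hXdef, conjTranspose_mul, hPinvH, hQH]
  have hYH : Yᴴ = P * Q⁻¹ := by rw [hYdef, conjTranspose_mul, hPH, hQinvH]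
  have hXY : Xᴴ * Y = 1 := by
    rw [hXH, hYdef, Matrix.mul_assoc, ← Matrix.mul_assoc Q Q⁻¹ P, hQinv, Matrix.one_mul, hPinv']
  have h1 : ((Xᴴ * Y).trace).re = (k : ℝ) := by rw [hXY, trace_one]; simp
  have hXX : (Xᴴ * X).trace = (A⁻¹ * B).trace := by
    have e : Xᴴ * X = P⁻¹ * B * P⁻¹ := by
      rw [hXH, hXdef, ← hQQ]; noncomm_ring
    rw [e, trace_mul_cycle, ← Matrix.mul_inv_rev, hPP]
  have hYY : (Yᴴ * Y).trace = (A * B⁻¹).trace := by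
    have e : Yᴴ * Y = P * B⁻¹ * P := by
      rw [hYH, hYdef, ← hQQ, Matrix.mul_inv_rev]; noncomm_ring
    rw [e, trace_mul_cycle, ← hPP]
  have h2 := cs_trace X Y
  rw [h1, hXX, hYY] at h2
  have h3 := trace_conjTranspose_mul_self_re_nonneg X
  have h4 := trace_conjTranspose_mul_self_re_nonneg Y
  rw [hXX] at h3; rw [hYY] at h4
  exact ⟨h2, h3, h4⟩

lemma rank_one_psd {k : ℕ} (a : Fin k → ℂ) (c : ℝ) (hc : 0 ≤ c) :
    (((c : ℂ))⁻¹ • Matrix.vecMulVec a (star a)).PosSemidef := by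
  refine Matrix.PosSemidef.of_dotProduct_mulVec_nonneg ?_ ?_
  · show _ᴴ = _
    rw [conjTranspose_smul]
    congr 1
    · simp [Complex.star_def, ← Complex.ofReal_inv, Complex.conj_ofReal]
    · ext i j
      simp [vecMulVec_apply, conjTranspose_apply, mul_comm]
  · intro x
    have hz : star x ⬝ᵥ ((((c : ℂ))⁻¹ • Matrix.vecMulVec a (star a)) *ᵥ x)
        = ((c⁻¹ * Complex.normSq (star a ⬝ᵥ x) : ℝ) : ℂ) := by
      push_cast
      simp only [Matrix.smul_mulVec, dotProduct_smul, smul_eq_mul]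
      rw [← Complex.ofReal_inv]
      congr 1
      have h1 : Matrix.vecMulVec a (star a) *ᵥ x = (star a ⬝ᵥ x) • a := by
        ext i
        simp [Matrix.mulVec, vecMulVec_apply, dotProduct, Finset.mul_sum, Finset.sum_mul,
          mul_comm, mul_assoc, mul_left_comm]
      rw [h1, dotProduct_smul, smul_eq_mul]
      rw [Complex.normSq_eq_conj_mul_self]
      have h2 : star x ⬝ᵥ a = (starRingEnd ℂ) (star a ⬝ᵥ x) := by
        simp [dotProduct, map_sum, mul_comm]
      rw [h2]
      ring
    rw [hz, Complex.zero_le_real]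
    exact mul_nonneg (inv_nonneg.2 hc) (Complex.normSq_nonneg _)

lemma trace_vecMulVec_mul {k : ℕ} (a : Fin k → ℂ) (C : Matrix (Fin k) (Fin k) ℂ) :
    (Matrix.vecMulVec a (star a) * C).trace = star a ⬝ᵥ (C *ᵥ a) := by
  simp only [Matrix.trace, Matrix.diag, Matrix.mul_apply, vecMulVec_apply, dotProduct,
    Matrix.mulVec, Pi.star_apply, Finset.mul_sum]
  rw [Finset.sum_comm]
  exact Finset.sum_congr rfl fun j _ => Finset.sum_congr rfl fun i _ => by ring

/-- Decay-rate bound on the MSE: if `W = V_Kᴴ Hᴴ H V_K` is positive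
definite and `ℓ_max = max_i ℓ_i` with `ℓ_i = λ_{w,i}⁻¹ v_iᴴ W⁻¹ v_i`, then for every `S`,
`MSE(S) ≥ k² / (trace(Λ⁻¹ W⁻¹) + |S| · ℓ_max)`. -/
theorem MSE_decay_rate_lower_bound
    (n k m : ℕ)
    (v : Fin n → Fin k → ℂ)
    (H : Matrix (Fin m) (Fin n) ℂ)
    (lam : Fin k → ℝ) (hlam : ∀ j, 0 < lam j)
    (lw : Fin n → ℝ) (hlw : ∀ i, 0 < lw i)
    (W : Matrix (Fin k) (Fin k) ℂ)
    (hWdef : W = (VKmat v)ᴴ * Hᴴ * H * VKmat v)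
    (hW : W.PosDef)
    (ell : Fin n → ℝ)
    (hell : ∀ i, ell i = (lw i)⁻¹ * (star (v i) ⬝ᵥ (W⁻¹ *ᵥ v i)).re)
    (lmax : ℝ) (hlmax : IsGreatest (Set.range ell) lmax)
    (S : Finset (Fin n)) :
    (k : ℝ) ^ 2 /
        ((((Matrix.diagonal fun j => (lam j : ℂ))⁻¹ * W⁻¹).trace).re + (S.card : ℝ) * lmax)
      ≤ MSE lam lw v H S := by
  set M := Mmat lam lw v S with hMdef
  have hM : M.PosDef := Mmat_posDef lam hlam lw hlw v S
  -- MSE = re trace (M⁻¹ * W)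
  have hMSE : MSE lam lw v H S = ((M⁻¹ * W).trace).re := by
    unfold MSE Kstar
    congr 1
    calc (H * VKmat v * M⁻¹ * (VKmat v)ᴴ * Hᴴ).trace
        = ((H * VKmat v * M⁻¹) * ((VKmat v)ᴴ * Hᴴ)).trace := by
          simp only [Matrix.mul_assoc]
      _ = (((VKmat v)ᴴ * Hᴴ) * (H * VKmat v * M⁻¹)).trace := trace_mul_comm _ _
      _ = ((W * M⁻¹)).trace := by rw [hWdef]; simp only [Matrix.mul_assoc]
      _ = ((M⁻¹ * W)).trace := trace_mul_comm _ _
  -- bound on re trace (M * W⁻¹)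
  have hb_eq : ((M * W⁻¹).trace).re
      = (((Matrix.diagonal fun j => (lam j : ℂ))⁻¹ * W⁻¹).trace).re + ∑ i ∈ S, ell i := by
    rw [hMdef]
    unfold Mmat
    rw [Matrix.add_mul, Finset.sum_mul, Matrix.trace_add, Matrix.trace_sum, Complex.add_re,
      Complex.re_sum]
    congr 1
    refine Finset.sum_congr rfl fun i _ => ?_
    rw [Matrix.smul_mul, Matrix.trace_smul, smul_eq_mul, ← Complex.ofReal_inv,
      Complex.re_ofReal_mul, trace_vecMulVec_mul, hell i]
  have hsum_le : ∑ i ∈ S, ell i ≤ (S.card : ℝ) * lmax := by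
    have := Finset.sum_le_card_nsmul S ell lmax (fun i _ => hlmax.2 ⟨i, rfl⟩)
    simpa [nsmul_eq_mul] using this
  obtain ⟨hcs, ha, hb⟩ := key_cs hM hW
  set a := ((M⁻¹ * W).trace).re
  set b := ((M * W⁻¹).trace).re
  set D := (((Matrix.diagonal fun j => (lam j : ℂ))⁻¹ * W⁻¹).trace).re + (S.card : ℝ) * lmax
    with hDdef
  have hbD : b ≤ D := by
    rw [hb_eq, hDdef]
    exact add_le_add_right hsum_le _
  rw [hMSE]
  rcases Nat.eq_zero_or_pos k with hk | hk
  · subst hk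
    simpa using ha
  · have hk2 : (0 : ℝ) < (k : ℝ) ^ 2 := by positivity
    have hbpos : 0 < b := by
      rcases hb.lt_or_eq with h | h
      · exact h
      · exfalso; nlinarith
    have hD : 0 < D := lt_of_lt_of_le hbpos hbD
    calc (k : ℝ) ^ 2 / D ≤ (k : ℝ) ^ 2 / b := by gcongr
    _ ≤ a := by rw [div_le_iff₀ hbpos]; exact hcs
end

section
/- Telescoping bound for α-supermodular functions: let V be a finite set and f : 2^V → ℝ be monotone decreasing and α-supermodular with α > 0. Then for all subsets A, B ⊆ V, f(B) ≥ f(A) + α^{-1} · Σ_{s ∈ B \ A} ( f(A ∪ {s}) − f(A) ). -/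
open Finset

/-- Telescoping bound for `α`-supermodular functions: if `f` is monotone
decreasing and `α`-supermodular with `α > 0`, then for all subsets `A, B`,
`f(B) ≥ f(A) + α⁻¹ ∑_{s ∈ B \ A} (f(A ∪ {s}) - f(A))`. -/
theorem alpha_supermodular_telescoping_bound
    {V : Type*} [Fintype V] [DecidableEq V]
    (f : Finset V → ℝ)
    (hmono : ∀ A B : Finset V, A ⊆ B → f B ≤ f A)
    (α : ℝ) (hα0 : 0 < α)
    (hsuper : ∀ A B : Finset V, A ⊆ B → ∀ u ∉ B,
      f (insert u A) - f A ≤ α * (f (insert u B) - f B))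
    (A B : Finset V) :
    f A + α⁻¹ * ∑ s ∈ B \ A, (f (insert s A) - f A) ≤ f B := by
  have key : ∀ S : Finset V, Disjoint S A →
      ∑ s ∈ S, (f (insert s A) - f A) ≤ α * (f (A ∪ S) - f A) := by
    intro S
    induction S using Finset.induction_on with
    | empty => intro _; simp
    | @insert u S hu ih =>
      intro hdisj
      have hdS : Disjoint S A := (Finset.disjoint_insert_left.mp hdisj).2
      have huA : u ∉ A := (Finset.disjoint_insert_left.mp hdisj).1
      have huAS : u ∉ A ∪ S := by simp [huA, hu]
      have h1 : f (insert u A) - f A ≤ α * (f (insert u (A ∪ S)) - f (A ∪ S)) :=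
        hsuper A (A ∪ S) Finset.subset_union_left u huAS
      have h2 := ih hdS
      rw [Finset.sum_insert hu]
      have : A ∪ insert u S = insert u (A ∪ S) := by
        ext x; simp [or_comm, or_left_comm]
      rw [this]
      nlinarith [h1, h2]
  have hd : Disjoint (B \ A) A := Finset.sdiff_disjoint
  have h := key (B \ A) hd
  have hu : A ∪ (B \ A) = A ∪ B := by
    ext x; simp
  rw [hu] at h
  have hmB : f (A ∪ B) ≤ f B := hmono B (A ∪ B) Finset.subset_union_right
  have hinv : α⁻¹ * ∑ s ∈ B \ A, (f (insert s A) - f A) ≤ f (A ∪ B) - f A := by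
    rw [inv_mul_le_iff₀ hα0]
    linarith
  linarith
end

section
/- Per-step contraction of the greedy step: let V be a finite set, f : 2^V → ℝ be monotone decreasing and α-supermodular with α > 0, and let k ≥ 1 be an integer. Let G ⊆ V and u ∈ V \ G satisfy f(G ∪ {u}) ≤ f(G ∪ {s}) for every s ∈ V \ G. Then for every subset S ⊆ V with |S| ≤ k, f(G ∪ {u}) − f(S) ≤ (1 − α/k) · ( f(G) − f(S) ). -/
open Finset

lemma greedy_sum_bound
    {V : Type*} [Fintype V] [DecidableEq V]
    (f : Finset V → ℝ) (α : ℝ)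
    (hsuper : ∀ A B : Finset V, A ⊆ B → ∀ u ∉ B,
      f (insert u A) - f A ≤ α * (f (insert u B) - f B))
    (G : Finset V) :
    ∀ T : Finset V, (∀ s ∈ T, s ∉ G) →
      (∑ s ∈ T, (f (insert s G) - f G)) ≤ α * (f (G ∪ T) - f G) := by
  intro T
  induction T using Finset.induction with
  | empty => intro _; simp
  | @insert a T ha ih =>
    intro hdisj
    have haG : a ∉ G := hdisj a (mem_insert_self a T)
    have hT : ∀ s ∈ T, s ∉ G := fun s hs => hdisj s (mem_insert_of_mem hs)
    have haGT : a ∉ G ∪ T := by simp [haG, ha]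
    have h1 : f (insert a G) - f G ≤ α * (f (insert a (G ∪ T)) - f (G ∪ T)) :=
      hsuper G (G ∪ T) subset_union_left a haGT
    have h2 := ih hT
    have heq : G ∪ insert a T = insert a (G ∪ T) := by
      ext x; simp [or_comm, or_left_comm]
    rw [Finset.sum_insert ha, heq]
    linarith

/-- Per-step contraction of the greedy step: if `f` is monotone
decreasing and `α`-supermodular with `α > 0`, `k ≥ 1`, and `u ∉ G` is a greedy choice at
`G`, then for every `S` with `|S| ≤ k`,
`f(G ∪ {u}) - f(S) ≤ (1 - α/k) (f(G) - f(S))`. -/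
theorem greedy_step_contraction
    {V : Type*} [Fintype V] [DecidableEq V]
    (f : Finset V → ℝ)
    (hmono : ∀ A B : Finset V, A ⊆ B → f B ≤ f A)
    (α : ℝ) (hα0 : 0 < α)
    (hsuper : ∀ A B : Finset V, A ⊆ B → ∀ u ∉ B,
      f (insert u A) - f A ≤ α * (f (insert u B) - f B))
    (k : ℕ) (hk : 1 ≤ k)
    (G : Finset V) (u : V) (hu : u ∉ G)
    (hgreedy : ∀ s ∉ G, f (insert u G) ≤ f (insert s G))
    (S : Finset V) (hScard : S.card ≤ k) :
    f (insert u G) - f S ≤ (1 - α / k) * (f G - f S) := by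
  set T : Finset V := S \ G with hTdef
  have hTG : ∀ s ∈ T, s ∉ G := fun s hs => (Finset.mem_sdiff.mp hs).2
  have hsum := greedy_sum_bound f α hsuper G T hTG
  have hGT : G ∪ T = G ∪ S := by
    ext x; simp [hTdef, Finset.mem_sdiff, or_comm]
  have hcardT : T.card ≤ k := le_trans (Finset.card_le_card (Finset.sdiff_subset)) hScard
  have hΔ : f (insert u G) - f G ≤ 0 := by
    have := hmono G (insert u G) (Finset.subset_insert u G)
    linarith
  -- each term in the sum is ≥ Δ
  have hlow : (T.card : ℝ) * (f (insert u G) - f G) ≤ ∑ s ∈ T, (f (insert s G) - f G) := by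
    have := Finset.card_nsmul_le_sum T (fun s => f (insert s G) - f G)
      (f (insert u G) - f G) (fun s hs => by
        simpa using sub_le_sub_right (hgreedy s (hTG s hs)) (f G))
    simpa [nsmul_eq_mul] using this
  have hmono2 : f (G ∪ S) ≤ f S := hmono S (G ∪ S) Finset.subset_union_right
  have hub : α * (f (G ∪ T) - f G) ≤ α * (f S - f G) := by
    rw [hGT]
    apply mul_le_mul_of_nonneg_left _ hα0.le
    linarith
  have hk' : (0:ℝ) < (k:ℝ) := by exact_mod_cast Nat.lt_of_lt_of_le Nat.zero_lt_one hk
  have hkT : (T.card : ℝ) ≤ (k:ℝ) := by exact_mod_cast hcardT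
  have hkey : (k:ℝ) * (f (insert u G) - f G) ≤ α * (f S - f G) := by
    nlinarith
  have hdiv : f (insert u G) - f G ≤ (α / k) * (f S - f G) := by
    rw [div_mul_eq_mul_div, le_div_iff₀ hk']
    nlinarith
  have : (1 - α / k) * (f G - f S) = (f G - f S) + (α / k) * (f S - f G) := by ring
  linarith
end
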